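/- For every positive integer M and every t ∈ [(M+1)/(M+2), 1], one has g₂^[M]( ((M+1)·t − M) / (M·t + (1 − M)) ) = t. (Equivalently, g₂^{−M}(t) = ((M+1)t − M)/(Mt + (1−M)) on [(M+1)/(M+2), 1].) -/
import Mathlib


/-- The element `g₂` of the Lodha–Moore group as a piecewise fractional linear map. -/
noncomputable def g₂ (t : ℝ) : ℝ :=
  if t ≤ 0 then t
  else if t ≤ 1 / 3 then t / (1 - t)
  else if t ≤ 1 / 2 then (4 * t - 1) / (5 * t - 1)
  else if t ≤ 1 then 1 / (2 - t)
  else t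

lemma g₂_half (s : ℝ) (h1 : 1 / 2 ≤ s) (h2 : s ≤ 1) : g₂ s = 1 / (2 - s) := by
  unfold g₂
  rcases eq_or_lt_of_le h1 with h | h
  · rw [← h]; norm_num
  · rw [if_neg (by linarith), if_neg (by linarith), if_neg (by linarith), if_pos h2]

lemma g₂_aux : ∀ M : ℕ, ∀ t : ℝ, ((M : ℝ) + 1) / ((M : ℝ) + 2) ≤ t → t ≤ 1 →
    g₂^[M] ((((M : ℝ) + 1) * t - (M : ℝ)) / ((M : ℝ) * t + (1 - (M : ℝ)))) = t := by
  intro M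
  induction M with
  | zero => intro t h1 h2; simp
  | succ n ih =>
    intro t h1 h2
    push_cast at h1 ⊢
    set c := (n : ℝ) with hc
    have hcn : (0:ℝ) ≤ c := Nat.cast_nonneg n
    have hc3 : (0:ℝ) < c + 3 := by linarith
    have h1' : (c + 2) ≤ (c + 3) * t := by
      rw [div_le_iff₀ (by linarith)] at h1; linarith
    have hd1 : 0 < (c + 1) * t - c := by nlinarith
    have hd2 : 0 < c * t + (1 - c) := by nlinarith
    set x := ((c + 1 + 1) * t - (c + 1)) / ((c + 1) * t + (1 - (c + 1))) with hx
    have hxd : (c + 1) * t + (1 - (c + 1)) = (c + 1) * t - c := by ring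
    have hx1 : 1 / 2 ≤ x := by
      rw [hx, hxd, le_div_iff₀ hd1]; nlinarith
    have hx2 : x ≤ 1 := by
      rw [hx, hxd, div_le_one hd1]; linarith
    rw [Function.iterate_succ_apply, g₂_half x hx1 hx2]
    have key : 1 / (2 - x) = ((c + 1) * t - c) / (c * t + (1 - c)) := by
      rw [hx, hxd]
      have h2x : (2 : ℝ) - ((c + 1 + 1) * t - (c + 1)) / ((c + 1) * t - c)
          = (c * t + (1 - c)) / ((c + 1) * t - c) := by
        field_simp
        ring
      rw [h2x, one_div_div]
    rw [key]
    exact ih t (by rw [div_le_iff₀ (by linarith)]; linarith) h2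

/-- On `[(M+1)/(M+2), 1]`, the inverse of `g₂^[M]` is given by
`t ↦ ((M+1)t − M)/(Mt + (1 − M))`. -/
theorem g₂_inv_iterate_formula₂ (M : ℕ) (hM : 0 < M) (t : ℝ)
    (ht : t ∈ Set.Icc (((M : ℝ) + 1) / ((M : ℝ) + 2)) 1) :
    g₂^[M] ((((M : ℝ) + 1) * t - (M : ℝ)) / ((M : ℝ) * t + (1 - (M : ℝ)))) = t :=
  g₂_aux M t ht.1 ht.2
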